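/- Let 0 < α < 1 and C > 0, and define g on the open set where all logarithm arguments below are positive by g(x,y,z) = (2−2y−z) ln(√(1−α)/(1+Cα)) + (2x+z) ln(α√(C(1+C))/√(1−α)) − y ln(1+Cα) + ((1−y)/2) ln(1−y) + ((1−z)/2) ln(1−z) + ((1−y−z)/2) ln(1−y−z) − x ln x − (x+z) ln(x+z) − (1−x−z) ln(1−x−z) − (1−x−y−z) ln(1−x−y−z). Let x₀ = Cα/(1+Cα) and y₀ = 1/(1+C). Then g is differentiable on a neighborhood of (x₀, y₀, 0) in ℝ³, g(x₀, y₀, 0) = 0, and all three partial derivatives of g vanish at (x₀, y₀, 0); equivalently, the three expressions ln[α²C(1+C)(1−x−z)(1−x−y−z)/((1−α)x(x+z))], ln[(1+Cα)(1−x−y−z)/((1−α)√((1−y)(1−y−z)))] and ln[α√(C(1+C))(1+Cα)(1−x−z)(1−x−y−z)/((1−α)(x+z)√((1−z)(1−y−z)))], which give ∂g/∂x, ∂g/∂y and ∂g/∂z respectively, are all zero at (x₀, y₀, 0). -/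

import Mathlib

open Filter

/-- The exponent function `g(x,y,z)` governing the large-index asymptotics of the
matrix-basis propagator of the noncommutative Gross–Neveu model. -/
noncomputable def gfun (C α x y z : ℝ) : ℝ :=
  (2 - 2 * y - z) * Real.log (Real.sqrt (1 - α) / (1 + C * α))
    + (2 * x + z) * Real.log (α * Real.sqrt (C * (1 + C)) / Real.sqrt (1 - α))
    - y * Real.log (1 + C * α)
    + (1 - y) / 2 * Real.log (1 - y)
    + (1 - z) / 2 * Real.log (1 - z)
    + (1 - y - z) / 2 * Real.log (1 - y - z)
    - x * Real.log x
    - (x + z) * Real.log (x + z)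
    - (1 - x - z) * Real.log (1 - x - z)
    - (1 - x - y - z) * Real.log (1 - x - y - z)

/-- `g` is differentiable near the critical point
`(x₀, y₀, 0) = (Cα/(1+Cα), 1/(1+C), 0)`, vanishes there together with its three partial
derivatives, and the three explicit logarithmic expressions giving `∂g/∂x`, `∂g/∂y`,
`∂g/∂z` vanish there. -/
theorem stmt15 (C α : ℝ) (hC : 0 < C) (hα0 : 0 < α) (hα1 : α < 1)
    (x₀ y₀ : ℝ) (hx₀ : x₀ = C * α / (1 + C * α)) (hy₀ : y₀ = 1 / (1 + C)) :
    (∀ᶠ p : ℝ × ℝ × ℝ in nhds (x₀, y₀, 0),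
        DifferentiableAt ℝ (fun q : ℝ × ℝ × ℝ => gfun C α q.1 q.2.1 q.2.2) p)
    ∧ gfun C α x₀ y₀ 0 = 0
    ∧ deriv (fun x => gfun C α x y₀ 0) x₀ = 0
    ∧ deriv (fun y => gfun C α x₀ y 0) y₀ = 0
    ∧ deriv (fun z => gfun C α x₀ y₀ z) 0 = 0
    ∧ Real.log (α ^ 2 * C * (1 + C) * (1 - x₀ - 0) * (1 - x₀ - y₀ - 0) /
        ((1 - α) * x₀ * (x₀ + 0))) = 0
    ∧ Real.log ((1 + C * α) * (1 - x₀ - y₀ - 0) /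
        ((1 - α) * Real.sqrt ((1 - y₀) * (1 - y₀ - 0)))) = 0
    ∧ Real.log (α * Real.sqrt (C * (1 + C)) * (1 + C * α) * (1 - x₀ - 0) *
          (1 - x₀ - y₀ - 0) /
        ((1 - α) * (x₀ + 0) * Real.sqrt ((1 - 0) * (1 - y₀ - 0)))) = 0 := by
  have h1α : (0:ℝ) < 1 - α := by linarith
  have h1C : (0:ℝ) < 1 + C := by linarith
  have h1Cα : (0:ℝ) < 1 + C * α := by positivity
  have hx0pos : 0 < x₀ := by rw [hx₀]; positivity
  have hfx : 1 - x₀ = (1 + C * α)⁻¹ := by rw [hx₀]; field_simp; ring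
  have hfy : 1 - y₀ = C / (1 + C) := by rw [hy₀]; field_simp; ring
  have hfxy : 1 - x₀ - y₀ = C * (1 - α) / ((1 + C * α) * (1 + C)) := by
    rw [hx₀, hy₀]; field_simp; ring
  have hx1 : 0 < 1 - x₀ := by rw [hfx]; positivity
  have hy1 : 0 < 1 - y₀ := by rw [hfy]; positivity
  have hxy1 : 0 < 1 - x₀ - y₀ := by rw [hfxy]; positivity
  have e1 : Real.log x₀ = Real.log C + Real.log α - Real.log (1 + C * α) := by
    rw [hx₀, Real.log_div (by positivity) (by positivity), Real.log_mul hC.ne' hα0.ne']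
  have e2 : Real.log (1 - x₀) = -Real.log (1 + C * α) := by rw [hfx, Real.log_inv]
  have e3 : Real.log (1 - x₀ - y₀)
      = Real.log C + Real.log (1 - α) - Real.log (1 + C * α) - Real.log (1 + C) := by
    rw [hfxy, Real.log_div (by positivity) (by positivity), Real.log_mul hC.ne' h1α.ne',
      Real.log_mul h1Cα.ne' h1C.ne']; ring
  have e4 : Real.log (1 - y₀) = Real.log C - Real.log (1 + C) := by
    rw [hfy, Real.log_div hC.ne' h1C.ne']
  set K1 := Real.log (Real.sqrt (1 - α) / (1 + C * α)) with hK1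
  set K2 := Real.log (α * Real.sqrt (C * (1 + C)) / Real.sqrt (1 - α)) with hK2
  have e5 : K1 = Real.log (1 - α) / 2 - Real.log (1 + C * α) := by
    rw [hK1, Real.log_div (by positivity) (by positivity), Real.log_sqrt h1α.le]
  have e6 : K2 = Real.log α + (Real.log C + Real.log (1 + C)) / 2 - Real.log (1 - α) / 2 := by
    rw [hK2, Real.log_div (by positivity) (by positivity), Real.log_mul hα0.ne' (by positivity),
      Real.log_sqrt (by positivity), Real.log_sqrt h1α.le, Real.log_mul hC.ne' h1C.ne']
  refine ⟨?_, ?_, ?_, ?_, ?_, ?_, ?_, ?_⟩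
  · -- eventual differentiability
    have key : ∀ p : ℝ × ℝ × ℝ, p.1 ≠ 0 → p.1 + p.2.2 ≠ 0 → (1:ℝ) - p.2.1 ≠ 0 →
        (1:ℝ) - p.2.2 ≠ 0 → 1 - p.2.1 - p.2.2 ≠ 0 → 1 - p.1 - p.2.2 ≠ 0 →
        1 - p.1 - p.2.1 - p.2.2 ≠ 0 →
        DifferentiableAt ℝ (fun q : ℝ × ℝ × ℝ => gfun C α q.1 q.2.1 q.2.2) p := by
      intro p h1 h2 h3 h4 h5 h6 h7
      simp only [gfun]
      fun_prop (disch := assumption)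
    have E1 : ∀ᶠ p : ℝ × ℝ × ℝ in nhds (x₀, y₀, 0), p.1 ≠ 0 :=
      (by fun_prop : ContinuousAt (fun p : ℝ × ℝ × ℝ => p.1) (x₀, y₀, 0)).eventually_ne
        hx0pos.ne'
    have E2 : ∀ᶠ p : ℝ × ℝ × ℝ in nhds (x₀, y₀, 0), p.1 + p.2.2 ≠ 0 :=
      (by fun_prop : ContinuousAt (fun p : ℝ × ℝ × ℝ => p.1 + p.2.2) (x₀, y₀, 0)).eventually_ne
        (by simpa using hx0pos.ne')
    have E3 : ∀ᶠ p : ℝ × ℝ × ℝ in nhds (x₀, y₀, 0), (1:ℝ) - p.2.1 ≠ 0 :=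
      (by fun_prop : ContinuousAt (fun p : ℝ × ℝ × ℝ => 1 - p.2.1) (x₀, y₀, 0)).eventually_ne
        hy1.ne'
    have E4 : ∀ᶠ p : ℝ × ℝ × ℝ in nhds (x₀, y₀, 0), (1:ℝ) - p.2.2 ≠ 0 :=
      (by fun_prop : ContinuousAt (fun p : ℝ × ℝ × ℝ => 1 - p.2.2) (x₀, y₀, 0)).eventually_ne
        (by norm_num)
    have E5 : ∀ᶠ p : ℝ × ℝ × ℝ in nhds (x₀, y₀, 0), 1 - p.2.1 - p.2.2 ≠ 0 :=
      (by fun_prop :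
        ContinuousAt (fun p : ℝ × ℝ × ℝ => 1 - p.2.1 - p.2.2) (x₀, y₀, 0)).eventually_ne
        (by simpa using hy1.ne')
    have E6 : ∀ᶠ p : ℝ × ℝ × ℝ in nhds (x₀, y₀, 0), 1 - p.1 - p.2.2 ≠ 0 :=
      (by fun_prop :
        ContinuousAt (fun p : ℝ × ℝ × ℝ => 1 - p.1 - p.2.2) (x₀, y₀, 0)).eventually_ne
        (by simpa using hx1.ne')
    have E7 : ∀ᶠ p : ℝ × ℝ × ℝ in nhds (x₀, y₀, 0), 1 - p.1 - p.2.1 - p.2.2 ≠ 0 :=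
      (by fun_prop :
        ContinuousAt (fun p : ℝ × ℝ × ℝ => 1 - p.1 - p.2.1 - p.2.2) (x₀, y₀, 0)).eventually_ne
        (by simpa using hxy1.ne')
    filter_upwards [E1, E2, E3, E4, E5, E6, E7] with p h1 h2 h3 h4 h5 h6 h7
    exact key p h1 h2 h3 h4 h5 h6 h7
  · -- value of g at the critical point
    simp only [gfun, sub_zero, add_zero, Real.log_one, mul_zero]
    rw [← hK1, ← hK2, e1, e2, e3, e4, e5, e6]
    ring
  · -- x-derivative
    have hfxx : (fun x => gfun C α x y₀ 0) = (fun x =>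
        ((2 - 2 * y₀) * K1 - y₀ * Real.log (1 + C * α)
          + (1 - y₀) / 2 * Real.log (1 - y₀) + (1 - y₀) / 2 * Real.log (1 - y₀))
        + 2 * K2 * x - 2 * (x * Real.log x) - (1 - x) * Real.log (1 - x)
        - (1 - x - y₀) * Real.log (1 - x - y₀)) := by
      funext x
      simp only [gfun, sub_zero, add_zero, Real.log_one, mul_zero]
      ring
    rw [hfxx]
    have hA : HasDerivAt (fun x : ℝ => 2 * K2 * x) (2 * K2) x₀ := by
      simpa using (hasDerivAt_id x₀).const_mul (2 * K2)
    have hB : HasDerivAt (fun x : ℝ => 2 * (x * Real.log x)) (2 * (Real.log x₀ + 1)) x₀ :=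
      (Real.hasDerivAt_mul_log hx0pos.ne').const_mul 2
    have hCt : HasDerivAt (fun x : ℝ => (1 - x) * Real.log (1 - x))
        ((Real.log (1 - x₀) + 1) * -1) x₀ :=
      (Real.hasDerivAt_mul_log hx1.ne').comp x₀ ((hasDerivAt_id x₀).const_sub 1)
    have hDt : HasDerivAt (fun x : ℝ => (1 - x - y₀) * Real.log (1 - x - y₀))
        ((Real.log (1 - x₀ - y₀) + 1) * -1) x₀ :=
      by have h := (Real.hasDerivAt_mul_log hxy1.ne').comp x₀
            (((hasDerivAt_id x₀).const_sub 1).sub_const y₀); exact h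
    have hsum := (((hA.const_add ((2 - 2 * y₀) * K1 - y₀ * Real.log (1 + C * α)
          + (1 - y₀) / 2 * Real.log (1 - y₀) + (1 - y₀) / 2 * Real.log (1 - y₀))).sub
        hB).sub hCt).sub hDt
    simp only [Pi.sub_def, Pi.add_def] at hsum
    rw [hsum.deriv, e6, e1, e2, e3]
    ring
  · -- y-derivative
    have hfyy : (fun y => gfun C α x₀ y 0) = (fun y =>
        (2 * K1 + 2 * x₀ * K2 - 2 * (x₀ * Real.log x₀) - (1 - x₀) * Real.log (1 - x₀))
        - 2 * K1 * y - Real.log (1 + C * α) * y + (1 - y) * Real.log (1 - y)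
        - (1 - x₀ - y) * Real.log (1 - x₀ - y)) := by
      funext y
      simp only [gfun, sub_zero, add_zero, Real.log_one, mul_zero]
      ring
    rw [hfyy]
    have h1 : HasDerivAt (fun y : ℝ => 2 * K1 * y) (2 * K1) y₀ := by
      simpa using (hasDerivAt_id y₀).const_mul (2 * K1)
    have h2 : HasDerivAt (fun y : ℝ => Real.log (1 + C * α) * y) (Real.log (1 + C * α)) y₀ := by
      simpa using (hasDerivAt_id y₀).const_mul (Real.log (1 + C * α))
    have h3 : HasDerivAt (fun y : ℝ => (1 - y) * Real.log (1 - y))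
        ((Real.log (1 - y₀) + 1) * -1) y₀ :=
      (Real.hasDerivAt_mul_log hy1.ne').comp y₀ ((hasDerivAt_id y₀).const_sub 1)
    have h4 : HasDerivAt (fun y : ℝ => (1 - x₀ - y) * Real.log (1 - x₀ - y))
        ((Real.log (1 - x₀ - y₀) + 1) * -1) y₀ :=
      (Real.hasDerivAt_mul_log hxy1.ne').comp y₀ ((hasDerivAt_id y₀).const_sub (1 - x₀))
    have hsum := (((h1.const_sub (2 * K1 + 2 * x₀ * K2 - 2 * (x₀ * Real.log x₀)
        - (1 - x₀) * Real.log (1 - x₀))).sub h2).add h3).sub h4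
    simp only [Pi.sub_def, Pi.add_def] at hsum
    rw [hsum.deriv, e5, e4, e3]
    ring
  · -- z-derivative
    have h10 : (1:ℝ) - 0 ≠ 0 := by norm_num
    have hy10 : (1:ℝ) - y₀ - 0 ≠ 0 := by rw [sub_zero]; exact hy1.ne'
    have hx00 : x₀ + 0 ≠ 0 := by rw [add_zero]; exact hx0pos.ne'
    have hx10 : (1:ℝ) - x₀ - 0 ≠ 0 := by rw [sub_zero]; exact hx1.ne'
    have hxy10 : (1:ℝ) - x₀ - y₀ - 0 ≠ 0 := by rw [sub_zero]; exact hxy1.ne'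
    have hfzz : (fun z => gfun C α x₀ y₀ z) = (fun z =>
        (2 - 2 * y₀ - z) * K1 + (2 * x₀ + z) * K2 - y₀ * Real.log (1 + C * α)
        + (1 - y₀) / 2 * Real.log (1 - y₀) + (1 - z) / 2 * Real.log (1 - z)
        + (1 - y₀ - z) / 2 * Real.log (1 - y₀ - z) - x₀ * Real.log x₀
        - (x₀ + z) * Real.log (x₀ + z) - (1 - x₀ - z) * Real.log (1 - x₀ - z)
        - (1 - x₀ - y₀ - z) * Real.log (1 - x₀ - y₀ - z)) := by
      funext z; simp only [gfun]; rfl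
    rw [hfzz]
    have ht1 : HasDerivAt (fun z : ℝ => (2 - 2 * y₀ - z) * K1) (-1 * K1) 0 :=
      ((hasDerivAt_id 0).const_sub (2 - 2 * y₀)).mul_const K1
    have ht2 : HasDerivAt (fun z : ℝ => (2 * x₀ + z) * K2) (1 * K2) 0 :=
      ((hasDerivAt_id 0).const_add (2 * x₀)).mul_const K2
    have hu5 : HasDerivAt (fun z : ℝ => (1 - z) / 2) (-1 / 2) 0 :=
      ((hasDerivAt_id 0).const_sub 1).div_const 2
    have hv5 : HasDerivAt (fun z : ℝ => Real.log (1 - z)) (((1:ℝ) - 0)⁻¹ * -1) 0 :=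
      (Real.hasDerivAt_log h10).comp 0 ((hasDerivAt_id 0).const_sub 1)
    have ht5 := hu5.mul hv5
    have hu6 : HasDerivAt (fun z : ℝ => (1 - y₀ - z) / 2) (-1 / 2) 0 :=
      ((hasDerivAt_id 0).const_sub (1 - y₀)).div_const 2
    have hv6 : HasDerivAt (fun z : ℝ => Real.log (1 - y₀ - z)) (((1:ℝ) - y₀ - 0)⁻¹ * -1) 0 :=
      (Real.hasDerivAt_log hy10).comp 0 ((hasDerivAt_id 0).const_sub (1 - y₀))
    have ht6 := hu6.mul hv6
    have ht8 : HasDerivAt (fun z : ℝ => (x₀ + z) * Real.log (x₀ + z))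
        ((Real.log (x₀ + 0) + 1) * 1) 0 :=
      (Real.hasDerivAt_mul_log hx00).comp 0 ((hasDerivAt_id 0).const_add x₀)
    have ht9 : HasDerivAt (fun z : ℝ => (1 - x₀ - z) * Real.log (1 - x₀ - z))
        ((Real.log (1 - x₀ - 0) + 1) * -1) 0 :=
      (Real.hasDerivAt_mul_log hx10).comp 0 ((hasDerivAt_id 0).const_sub (1 - x₀))
    have ht10 : HasDerivAt (fun z : ℝ => (1 - x₀ - y₀ - z) * Real.log (1 - x₀ - y₀ - z))
        ((Real.log (1 - x₀ - y₀ - 0) + 1) * -1) 0 :=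
      (Real.hasDerivAt_mul_log hxy10).comp 0 ((hasDerivAt_id 0).const_sub (1 - x₀ - y₀))
    have hsum := ((((((((ht1.add ht2).sub_const (y₀ * Real.log (1 + C * α))).add_const
        ((1 - y₀) / 2 * Real.log (1 - y₀))).add ht5).add ht6).sub_const
        (x₀ * Real.log x₀)).sub ht8).sub ht9).sub ht10
    simp only [Pi.sub_def, Pi.add_def, Pi.mul_def] at hsum
    rw [hsum.deriv]
    simp only [sub_zero, add_zero, Real.log_one, mul_zero, inv_one, mul_one]
    rw [e5, e6, e1, e2, e3, e4]
    field_simp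
    ring
  · -- first log expression
    rw [show α ^ 2 * C * (1 + C) * (1 - x₀ - 0) * (1 - x₀ - y₀ - 0) /
        ((1 - α) * x₀ * (x₀ + 0)) = 1 from by rw [hx₀, hy₀]; field_simp; ring]
    exact Real.log_one
  · -- second log expression
    simp only [sub_zero]
    rw [Real.sqrt_mul_self hy1.le,
      show (1 + C * α) * (1 - x₀ - y₀) / ((1 - α) * (1 - y₀)) = 1 from by
        rw [hx₀, hy₀]; field_simp; ring_nf; field_simp; ring]
    exact Real.log_one
  · -- third log expression
    have hs : Real.sqrt (C * (1 + C)) = (1 + C) * Real.sqrt (C / (1 + C)) := by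
      rw [show C * (1 + C) = (1 + C) ^ 2 * (C / (1 + C)) from by field_simp,
        Real.sqrt_mul (by positivity), Real.sqrt_sq h1C.le]
    have hsne : Real.sqrt (C / (1 + C)) ≠ 0 := by positivity
    simp only [sub_zero, add_zero, one_mul]
    rw [hs, hfy,
      show α * ((1 + C) * Real.sqrt (C / (1 + C))) * (1 + C * α) * (1 - x₀) *
          (1 - x₀ - y₀) / ((1 - α) * x₀ * Real.sqrt (C / (1 + C))) = 1 from by
        rw [hx₀, hy₀]; field_simp; ring]
    exact Real.log_one
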